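/- arXiv:2003.04750 — 4 statements merged into one kernel-verified Lean document; each statement's English description precedes it below -/
import Mathlib

section
/- A nonempty open subset of the Cantor set is homeomorphic to the Cantor set if it is compact, and is homeomorphic to the Cantor set minus a point if it is not compact. -/
namespace CantorClass


/-- Basic cylinder over a finite word. -/
def cyl (s : List Bool) : Set (ℕ → Bool) := {x | ∀ i, (h : i < s.length) → x i = s[i]}

lemma isOpen_cyl (s : List Bool) : IsOpen (cyl s) := by
  have : cyl s = ⋂ i ∈ Finset.range s.length, (fun x : ℕ → Bool => x i) ⁻¹' {s.getD i false} := by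
    ext x
    simp only [cyl, Set.mem_setOf_eq, Set.mem_iInter, Finset.mem_range, Set.mem_preimage,
      Set.mem_singleton_iff]
    constructor
    · intro h i hi; rw [h i hi, List.getD_eq_getElem s false hi]
    · intro h i hi; rw [h i hi, List.getD_eq_getElem s false hi]
  rw [this]
  exact isOpen_biInter_finset fun i _ => (continuous_apply i).isOpen_preimage _ (isOpen_discrete _)

lemma isClosed_cyl (s : List Bool) : IsClosed (cyl s) := by
  have : cyl s = ⋂ i, ⋂ (h : i < s.length), {x : ℕ → Bool | x i = s[i]} := by
    ext x; simp [cyl]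
  rw [this]
  exact isClosed_iInter fun i => isClosed_iInter fun h =>
    isClosed_eq (continuous_apply i) continuous_const

lemma cyl_self_mem (s : List Bool) : (fun i => s.getD i false) ∈ cyl s := by
  intro i h; exact List.getD_eq_getElem s false h

lemma cyl_nonempty (s : List Bool) : (cyl s).Nonempty := ⟨_, cyl_self_mem s⟩

/-- first `n` letters of `x` -/
def pre (x : ℕ → Bool) (n : ℕ) : List Bool := List.ofFn (n := n) fun i => x i

@[simp] lemma length_pre (x : ℕ → Bool) (n : ℕ) : (pre x n).length = n := by simp [pre]

lemma mem_cyl_pre {z x : ℕ → Bool} {n : ℕ} : z ∈ cyl (pre x n) ↔ ∀ i < n, z i = x i := by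
  simp [cyl, pre]

lemma pre_congr {x y : ℕ → Bool} {n : ℕ} (h : ∀ i < n, x i = y i) : pre x n = pre y n := by
  simp only [pre]
  congr 1; funext i; exact h i i.2




/-- append a word in front of an infinite sequence -/
noncomputable def app (s : List Bool) (y : ℕ → Bool) : ℕ → Bool :=
  fun n => if h : n < s.length then s[n] else y (n - s.length)

lemma app_mem_cyl (s : List Bool) (y : ℕ → Bool) : app s y ∈ cyl s := by
  intro i h; simp [app, h]

/-- A basic cylinder is homeomorphic to the whole Cantor set. -/
noncomputable def cylHomeo (s : List Bool) : ↥(cyl s) ≃ₜ (ℕ → Bool) where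
  toFun x := fun n => x.1 (n + s.length)
  invFun y := ⟨app s y, app_mem_cyl s y⟩
  left_inv := by
    rintro ⟨x, hx⟩
    ext n
    simp only [app]
    split
    · next h => exact (hx n h).symm
    · next h => rw [Nat.sub_add_cancel (le_of_not_gt h)]
  right_inv := by
    intro y
    ext n
    simp [app, Nat.add_sub_cancel]
  continuous_toFun := continuous_pi fun n =>
    (continuous_apply (n + s.length)).comp continuous_subtype_val
  continuous_invFun := by
    refine Continuous.subtype_mk (continuous_pi fun n => ?_) _
    by_cases h : n < s.length
    · simpa [app, h] using continuous_const
    · simpa [app, h] using continuous_apply (n - s.length)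

/-- Reindexing a constant-fiber sigma along an equivalence of (discrete) index types. -/
def sigmaReindexEquiv {I J : Type} (e : I ≃ J) (X : Type) :
    (Σ _ : I, X) ≃ (Σ _ : J, X) where
  toFun p := ⟨e p.1, p.2⟩
  invFun p := ⟨e.symm p.1, p.2⟩
  left_inv p := by cases p; simp
  right_inv p := by cases p; simp

def sigmaReindex {I J : Type} (e : I ≃ J) (X : Type) [TopologicalSpace X] :
    (Σ _ : I, X) ≃ₜ (Σ _ : J, X) where
  toEquiv := sigmaReindexEquiv e X
  continuous_toFun := by
    refine continuous_sigma fun i => ?_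
    exact continuous_sigmaMk (σ := fun _ : J => X) (i := e i)
  continuous_invFun := by
    refine continuous_sigma fun j => ?_
    exact continuous_sigmaMk (σ := fun _ : I => X) (i := e.symm j)

/-- An open set partitioned into open sets is homeomorphic to the sigma type. -/
lemma partition_homeo {I : Type} (A : I → Set (ℕ → Bool)) (hA : ∀ i, IsOpen (A i))
    (hdisj : Pairwise (Function.onFun Disjoint A)) (U : Set (ℕ → Bool))
    (hun : ⋃ i, A i = U) :
    Nonempty ((Σ i, ↥(A i)) ≃ₜ ↥U) := by
  have hsub : ∀ i, A i ⊆ U := fun i => hun ▸ Set.subset_iUnion A i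
  let f : (Σ i, ↥(A i)) → ↥U := fun p => ⟨p.2.1, hsub p.1 p.2.2⟩
  have hinj : Function.Injective f := by
    rintro ⟨i, x, hx⟩ ⟨j, y, hy⟩ h
    have hxy : x = y := congrArg Subtype.val h
    subst hxy
    have hij : i = j := by
      by_contra hij
      exact (hdisj hij).ne_of_mem hx hy rfl
    subst hij; rfl
  have hsurj : Function.Surjective f := by
    rintro ⟨x, hx⟩
    rw [← hun] at hx
    obtain ⟨i, hi⟩ := Set.mem_iUnion.1 hx
    exact ⟨⟨i, x, hi⟩, rfl⟩
  have hcont : Continuous f := by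
    refine continuous_sigma fun i => ?_
    exact Continuous.subtype_mk continuous_subtype_val _
  have hopen : IsOpenMap f := by
    rw [isOpenMap_sigma]
    intro i
    intro V hV
    obtain ⟨W, hW, rfl⟩ := isOpen_induced_iff.1 hV
    have : (fun a : ↥(A i) => f ⟨i, a⟩) '' (Subtype.val ⁻¹' W)
        = Subtype.val ⁻¹' (W ∩ A i) := by
      ext ⟨x, hx⟩
      simp only [Set.mem_image, Set.mem_preimage, Set.mem_inter_iff, Subtype.exists, f]
      constructor
      · rintro ⟨a, ha, haW, h⟩
        cases congrArg Subtype.val h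
        exact ⟨haW, ha⟩
      · rintro ⟨hxW, hxA⟩
        exact ⟨x, hxA, hxW, rfl⟩
    rw [this]
    exact (hW.inter (hA i)).preimage continuous_subtype_val
  exact ⟨Equiv.toHomeomorphOfContinuousOpen (Equiv.ofBijective f ⟨hinj, hsurj⟩) hcont hopen⟩

/-- sigma congr right for homeomorphisms -/
def sigmaCongrRight {I : Type} {X Y : I → Type} [∀ i, TopologicalSpace (X i)]
    [∀ i, TopologicalSpace (Y i)] (e : ∀ i, X i ≃ₜ Y i) : (Σ i, X i) ≃ₜ (Σ i, Y i) where
  toEquiv := Equiv.sigmaCongrRight fun i => (e i).toEquiv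
  continuous_toFun := continuous_sigma fun i => continuous_sigmaMk.comp (e i).continuous
  continuous_invFun := continuous_sigma fun i => continuous_sigmaMk.comp (e i).symm.continuous



lemma exists_decomp (U : Set (ℕ → Bool)) (hU : IsOpen U) (hne : U.Nonempty) :
    ∃ S : Set (List Bool), S.Nonempty ∧ S.PairwiseDisjoint cyl ∧ (⋃ s ∈ S, cyl s) = U ∧
      (IsCompact U ↔ S.Finite) := by
  have hP : ∀ x : ↥U, ∃ n, cyl (pre x.1 n) ⊆ U := by
    rintro ⟨x, hx⟩
    obtain ⟨F, u, hu, hsub⟩ := isOpen_pi_iff.1 hU x hx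
    refine ⟨F.sup id + 1, fun z hz => hsub ?_⟩
    intro i hi
    have hi' : i < F.sup id + 1 := Nat.lt_succ_of_le (Finset.le_sup (f := id) hi)
    rw [mem_cyl_pre.1 hz i hi']
    exact (hu i hi).2
  classical
  let N : ↥U → ℕ := fun x => Nat.find (hP x)
  have hNspec : ∀ x : ↥U, cyl (pre x.1 (N x)) ⊆ U := fun x => Nat.find_spec (hP x)
  have hNmin : ∀ (x : ↥U) (m), cyl (pre x.1 m) ⊆ U → N x ≤ m := fun x m h =>
    Nat.find_le h
  set S : Set (List Bool) := Set.range (fun x : ↥U => pre x.1 (N x)) with hS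
  have hSsub : ∀ s ∈ S, cyl s ⊆ U := by rintro s ⟨x, rfl⟩; exact hNspec x
  -- key uniqueness
  have key : ∀ (x y : ↥U), N x ≤ N y → ∀ z, z ∈ cyl (pre x.1 (N x)) →
      z ∈ cyl (pre y.1 (N y)) → pre x.1 (N x) = pre y.1 (N y) := by
    intro x y hle z hzx hzy
    have hxy : ∀ i < N x, x.1 i = y.1 i := fun i hi => by
      rw [← mem_cyl_pre.1 hzx i hi, mem_cyl_pre.1 hzy i (lt_of_lt_of_le hi hle)]
    have hpre : pre x.1 (N x) = pre y.1 (N x) := pre_congr hxy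
    have hyx : N y ≤ N x := hNmin y (N x) (hpre ▸ hNspec x)
    have : N y = N x := le_antisymm hyx hle
    rw [hpre, this]
  have hdisj : S.PairwiseDisjoint cyl := by
    rintro s ⟨x, rfl⟩ t ⟨y, rfl⟩ hst
    rw [Function.onFun]
    by_contra hnd
    obtain ⟨z, hzs, hzt⟩ := Set.not_disjoint_iff.1 hnd
    rcases le_total (N x) (N y) with h | h
    · exact hst (key x y h z hzs hzt)
    · exact hst (key y x h z hzt hzs).symm
  have hcover : (⋃ s ∈ S, cyl s) = U := by
    apply Set.Subset.antisymm
    · exact Set.iUnion₂_subset hSsub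
    · intro x hx
      refine Set.mem_biUnion (Set.mem_range_self (⟨x, hx⟩ : ↥U)) ?_
      exact mem_cyl_pre.2 fun i _ => rfl
  have hSne : S.Nonempty := by
    obtain ⟨x, hx⟩ := hne
    exact ⟨_, Set.mem_range_self (⟨x, hx⟩ : ↥U)⟩
  refine ⟨S, hSne, hdisj, hcover, ?_, ?_⟩
  · intro hc
    have hcov2 : U ⊆ ⋃ s : ↥S, cyl s.1 := by
      rw [← hcover]; intro x hx
      simpa [Set.iUnion_coe_set] using hx
    obtain ⟨T, hT⟩ := hc.elim_finite_subcover (fun s : ↥S => cyl s.1)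
      (fun s => isOpen_cyl s.1) hcov2
    have hsubT : S ⊆ Subtype.val '' (T : Set ↥S) := by
      intro s hs
      obtain ⟨w, hw⟩ := cyl_nonempty s
      have hwU : w ∈ U := hSsub s hs hw
      obtain ⟨t, ht, hwt⟩ := Set.mem_iUnion₂.1 (hT hwU)
      have hst : s = t.1 := by
        by_contra hne'
        exact Set.disjoint_left.1 (hdisj hs t.2 hne') hw hwt
      exact ⟨t, ht, hst.symm⟩
    exact (T.finite_toSet.image _).subset hsubT
  · intro hfin
    rw [← hcover]
    exact hfin.isCompact_biUnion fun s _ => (isClosed_cyl s).isCompact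


lemma mem_cyl_concat {x : ℕ → Bool} {s : List Bool} {b : Bool} :
    x ∈ cyl (s ++ [b]) ↔ x ∈ cyl s ∧ x s.length = b := by
  constructor
  · intro h
    refine ⟨fun i hi => ?_, ?_⟩
    · have := h i (by simp; omega)
      rwa [List.getElem_append_left hi] at this
    · have := h s.length (by simp)
      simpa using this
  · rintro ⟨h1, h2⟩ i hi
    simp only [List.length_append, List.length_singleton] at hi
    rcases Nat.lt_or_ge i s.length with h | h
    · rw [List.getElem_append_left h]; exact h1 i h
    · have : i = s.length := by omega
      subst this
      simpa using h2

lemma cyl_concat_disjoint (s : List Bool) : Disjoint (cyl (s ++ [false])) (cyl (s ++ [true])) := by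
  rw [Set.disjoint_left]
  intro x h1 h2
  have e1 := (mem_cyl_concat.1 h1).2
  have e2 := (mem_cyl_concat.1 h2).2
  rw [e1] at e2; exact Bool.false_ne_true e2

lemma cyl_concat_subset (s : List Bool) (b : Bool) : cyl (s ++ [b]) ⊆ cyl s :=
  fun _ h => (mem_cyl_concat.1 h).1

lemma cyl_split (s : List Bool) : cyl s = cyl (s ++ [false]) ∪ cyl (s ++ [true]) := by
  ext x
  constructor
  · intro h
    rcases Bool.eq_false_or_eq_true (x s.length) with hb | hb
    · exact Or.inr (mem_cyl_concat.2 ⟨h, hb⟩)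
    · exact Or.inl (mem_cyl_concat.2 ⟨h, hb⟩)
  · rintro (h | h) <;> exact cyl_concat_subset _ _ h

lemma univ_decomp (k : ℕ) : ∃ d : Fin (k+1) → List Bool,
    Pairwise (Function.onFun Disjoint (fun i => CantorClass.cyl (d i))) ∧ (⋃ i, cyl (d i)) = Set.univ := by
  induction k with
  | zero =>
    refine ⟨fun _ => [], ?_, ?_⟩
    · intro i j hij
      exact absurd (Fin.ext (by omega)) hij
    · ext x; simp [cyl]
  | succ k ih =>
    obtain ⟨d, hdisj, hcov⟩ := ih
    refine ⟨fun i => if i.1 = 0 then d 0 ++ [false] else if i.1 = 1 then d 0 ++ [true]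
      else d ⟨i.1 - 1, by have := i.isLt; omega⟩, ?_, ?_⟩
    · -- pairwise disjoint
      have main : ∀ i j : Fin (k+2), i.1 < j.1 → Disjoint
          (cyl (if i.1 = 0 then d 0 ++ [false] else if i.1 = 1 then d 0 ++ [true]
            else d ⟨i.1 - 1, by have := i.isLt; omega⟩))
          (cyl (if j.1 = 0 then d 0 ++ [false] else if j.1 = 1 then d 0 ++ [true]
            else d ⟨j.1 - 1, by have := j.isLt; omega⟩)) := by
        intro i j hij
        have hjne0 : ¬ j.1 = 0 := by omega
        rcases Nat.lt_or_ge j.1 2 with hj1 | hj2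
        · -- j = 1, so i = 0
          have hj : j.1 = 1 := by omega
          have hi0 : i.1 = 0 := by omega
          rw [if_pos hi0, if_neg hjne0, if_pos hj]
          exact cyl_concat_disjoint (d 0)
        · -- j ≥ 2
          have hjne1 : ¬ j.1 = 1 := by omega
          rw [if_neg hjne0, if_neg hjne1]
          rcases Nat.lt_or_ge i.1 1 with hi0 | hi1
          · rw [if_pos (show i.1 = 0 by omega)]
            refine Disjoint.mono_left (cyl_concat_subset _ _) ?_
            exact hdisj (show (0 : Fin (k+1)) ≠ ⟨j.1 - 1, _⟩ from
              Fin.ne_of_val_ne (by simp; omega))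
          · rcases Nat.lt_or_ge i.1 2 with hi1' | hi2
            · rw [if_neg (show ¬ i.1 = 0 by omega), if_pos (show i.1 = 1 by omega)]
              refine Disjoint.mono_left (cyl_concat_subset _ _) ?_
              exact hdisj (show (0 : Fin (k+1)) ≠ ⟨j.1 - 1, _⟩ from
                Fin.ne_of_val_ne (by simp; omega))
            · rw [if_neg (show ¬ i.1 = 0 by omega), if_neg (show ¬ i.1 = 1 by omega)]
              exact hdisj (show (⟨i.1 - 1, _⟩ : Fin (k+1)) ≠ ⟨j.1 - 1, _⟩ from
                Fin.ne_of_val_ne (by simp; omega))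
      intro i j hij
      rcases Nat.lt_or_ge i.1 j.1 with h | h
      · exact main i j h
      · have hlt : j.1 < i.1 := lt_of_le_of_ne h (fun e => hij (Fin.ext e.symm))
        exact (main j i hlt).symm
    · -- cover
      apply Set.eq_univ_of_univ_subset
      intro x _
      have hx : x ∈ ⋃ i, cyl (d i) := hcov ▸ Set.mem_univ x
      obtain ⟨i, hi⟩ := Set.mem_iUnion.1 hx
      rcases Nat.eq_zero_or_pos i.1 with hi0 | hipos
      · have hi' : i = 0 := Fin.ext hi0
        subst hi'
        rw [cyl_split (d 0)] at hi
        rcases hi with h | h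
        · exact Set.mem_iUnion.2 ⟨⟨0, by omega⟩, by simpa using h⟩
        · exact Set.mem_iUnion.2 ⟨⟨1, by omega⟩, by simpa using h⟩
      · refine Set.mem_iUnion.2 ⟨⟨i.1 + 1, Nat.succ_lt_succ i.isLt⟩, ?_⟩
        show x ∈ cyl (if i.1 + 1 = 0 then _ else if i.1 + 1 = 1 then _ else
          d ⟨i.1 + 1 - 1, by have := i.isLt; omega⟩)
        rw [if_neg (show ¬ i.1 + 1 = 0 by omega), if_neg (show ¬ i.1 + 1 = 1 by omega)]
        have he : (⟨i.1 + 1 - 1, by have := i.isLt; omega⟩ : Fin (k+1)) = i := Fin.ext (by simp)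
        rwa [he]


lemma compl_singleton_nonempty (p : ℕ → Bool) : ({p}ᶜ : Set (ℕ → Bool)).Nonempty := by
  refine ⟨Function.update p 0 (!p 0), ?_⟩
  simp only [Set.mem_compl_iff, Set.mem_singleton_iff]
  intro h
  have := congrFun h 0
  rw [Function.update_self] at this
  exact (Bool.not_ne_self (p 0)) this

lemma not_isOpen_singleton (p : ℕ → Bool) : ¬ IsOpen ({p} : Set (ℕ → Bool)) := by
  intro h
  obtain ⟨F, u, hu, hsub⟩ := isOpen_pi_iff.1 h p rfl
  set m := F.sup id + 1 with hm
  have hmF : m ∉ F := by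
    intro hmem
    have : m ≤ F.sup id := Finset.le_sup (f := id) hmem
    omega
  have hq : Function.update p m (!p m) ∈ (F : Set ℕ).pi u := by
    intro i hi
    rw [Function.update_of_ne (fun e : i = m => hmF (e ▸ hi))]
    exact (hu i hi).2
  have := hsub hq
  simp only [Set.mem_singleton_iff] at this
  have := congrFun this m
  rw [Function.update_self] at this
  exact (Bool.not_ne_self (p m)) this

lemma not_isCompact_compl_singleton (p : ℕ → Bool) :
    ¬ IsCompact ({p}ᶜ : Set (ℕ → Bool)) := by
  intro h
  have hcl : IsClosed ({p}ᶜ : Set (ℕ → Bool)) := h.isClosed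
  have : IsOpen ({p} : Set (ℕ → Bool)) := by
    rw [← compl_compl ({p} : Set (ℕ → Bool))]
    exact hcl.isOpen_compl
  exact not_isOpen_singleton p this


lemma open_homeo_sigma (U : Set (ℕ → Bool)) (hU : IsOpen U) (hne : U.Nonempty) :
    ∃ S : Set (List Bool), S.Nonempty ∧ (IsCompact U ↔ S.Finite) ∧
      Nonempty (↥U ≃ₜ Σ _ : ↥S, (ℕ → Bool)) := by
  obtain ⟨S, hSne, hdisj, hcov, hiff⟩ := exists_decomp U hU hne
  have hpair : Pairwise (Function.onFun Disjoint (fun s : ↥S => cyl s.1)) := by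
    intro s t hst
    exact hdisj s.2 t.2 (fun h => hst (Subtype.ext h))
  have hun : ⋃ s : ↥S, cyl s.1 = U := by
    rw [← hcov]
    exact Set.iUnion_coe_set _ _
  obtain ⟨e⟩ := partition_homeo (fun s : ↥S => cyl s.1) (fun s => isOpen_cyl s.1) hpair U hun
  exact ⟨S, hSne, hiff, ⟨e.symm.trans (sigmaCongrRight fun s => cylHomeo s.1)⟩⟩

end CantorClass

/-- A nonempty open subset of the Cantor set is homeomorphic to the Cantor set if compact,
and to the Cantor set minus a point if not compact. -/
theorem open_subset_cantor_classification (U : Set (ℕ → Bool)) (hU : IsOpen U)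
    (hne : U.Nonempty) :
    (IsCompact U → Nonempty (↥U ≃ₜ (ℕ → Bool))) ∧
    (¬ IsCompact U → ∀ p : ℕ → Bool, Nonempty (↥U ≃ₜ ↥({p}ᶜ : Set (ℕ → Bool)))) := by
  obtain ⟨S, hSne, hiff, ⟨e⟩⟩ := CantorClass.open_homeo_sigma U hU hne
  constructor
  · intro hc
    have hfin : S.Finite := hiff.1 hc
    have : Fintype ↥S := hfin.fintype
    have hpos : 0 < Fintype.card ↥S := Fintype.card_pos_iff.2 hSne.to_subtype
    obtain ⟨k, hk⟩ : ∃ k, Fintype.card ↥S = k + 1 :=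
      ⟨Fintype.card ↥S - 1, (Nat.succ_pred_eq_of_pos hpos).symm⟩
    obtain ⟨d, hd1, hd2⟩ := CantorClass.univ_decomp k
    obtain ⟨e2⟩ := CantorClass.partition_homeo (fun i => CantorClass.cyl (d i)) (fun i => CantorClass.isOpen_cyl _) hd1 Set.univ hd2
    have e3 := CantorClass.sigmaCongrRight (fun i : Fin (k+1) => CantorClass.cylHomeo (d i))
    have eS : ↥S ≃ Fin (k+1) := (Fintype.equivFin ↥S).trans (finCongr hk)
    exact ⟨((((e.trans (CantorClass.sigmaReindex eS _)).trans e3.symm).trans e2).trans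
      (Homeomorph.Set.univ _))⟩
  · intro hnc p
    have hinf : S.Infinite := fun hfin => hnc (hiff.2 hfin)
    obtain ⟨S', hSne', hiff', ⟨e'⟩⟩ := CantorClass.open_homeo_sigma ({p}ᶜ : Set (ℕ → Bool))
      isOpen_compl_singleton (CantorClass.compl_singleton_nonempty p)
    have hinf' : S'.Infinite := fun hfin => CantorClass.not_isCompact_compl_singleton p (hiff'.2 hfin)
    have hc1 : Countable ↥S := (Set.to_countable S).to_subtype
    have hc2 : Countable ↥S' := (Set.to_countable S').to_subtype
    have hi1 : Infinite ↥S := hinf.to_subtype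
    have hi2 : Infinite ↥S' := hinf'.to_subtype
    obtain ⟨D1⟩ := nonempty_denumerable_iff.2 ⟨hc1, hi1⟩
    obtain ⟨D2⟩ := nonempty_denumerable_iff.2 ⟨hc2, hi2⟩
    have eN : ↥S ≃ ↥S' := (@Denumerable.eqv _ D1).trans (@Denumerable.eqv _ D2).symm
    exact ⟨(e.trans (CantorClass.sigmaReindex eN _)).trans e'.symm⟩
end

section
/- For countable ordinals α and β, the ordinal spaces ω^α + 1 and ω^β + 1 (with their order topologies) are homeomorphic if and only if α = β. -/
open Ordinal Set Filter Topology Order Set.Notation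

noncomputable section CB

/-- The iterated Cantor–Bendixson derivative of the whole space. -/
noncomputable def cbIter (X : Type*) [TopologicalSpace X] (γ : Ordinal) : Set X :=
  Ordinal.limitRecOn γ Set.univ (fun _ ih => derivedSet ih)
    (fun o _ ih => ⋂ (δ : Ordinal) (h : δ < o), ih δ h)

variable {X Y : Type*} [TopologicalSpace X] [TopologicalSpace Y]

lemma cbIter_zero : cbIter X 0 = Set.univ := Ordinal.limitRecOn_zero ..

lemma cbIter_succ (γ : Ordinal) :
    cbIter X (Order.succ γ) = derivedSet (cbIter X γ) := Ordinal.limitRecOn_succ ..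

lemma cbIter_limit {o : Ordinal} (h : IsSuccLimit o) :
    cbIter X o = ⋂ (δ : Ordinal) (_ : δ < o), cbIter X δ := Ordinal.limitRecOn_limit _ _ _ _ h

lemma Homeomorph.image_derivedSet' (f : X ≃ₜ Y) (A : Set X) :
    f '' derivedSet A = derivedSet (f '' A) := by
  apply subset_antisymm (f.continuous.image_derivedSet f.injective)
  have h2 := f.symm.continuous.image_derivedSet f.symm.injective (A := f '' A)
  intro y hy
  have h3 : f.symm y ∈ derivedSet (f.symm '' (f '' A)) := h2 ⟨y, hy, rfl⟩
  rw [Set.image_image] at h3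
  simp only [Homeomorph.symm_apply_apply, Set.image_id'] at h3
  exact ⟨f.symm y, h3, f.apply_symm_apply y⟩

lemma cbIter_image (f : X ≃ₜ Y) (γ : Ordinal) : f '' cbIter X γ = cbIter Y γ := by
  induction γ using Ordinal.limitRecOn with
  | zero => rw [cbIter_zero, cbIter_zero, Set.image_univ, f.surjective.range_eq]
  | add_one γ ih => rw [Ordinal.add_one_eq_succ, cbIter_succ, cbIter_succ, f.image_derivedSet', ih]
  | limit o ho ih =>
      rw [cbIter_limit ho, cbIter_limit ho, Set.image_iInter₂ f.bijective]
      exact Set.iInter_congr fun δ => Set.iInter_congr fun h => ih δ h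

end CB

section OrdinalSide

/-- Image under `Subtype.val` of the derived set computed in the subspace `Iio o`. -/
lemma image_derivedSet_Iio {o : Ordinal} (S : Set ↥(Set.Iio o)) :
    Subtype.val '' derivedSet S = derivedSet (Subtype.val '' S) ∩ Set.Iio o := by
  have hpre : Set.Iio o ↓∩ (Subtype.val '' S) = S :=
    Set.preimage_image_eq S Subtype.val_injective
  ext x
  constructor
  · rintro ⟨⟨p, hp⟩, hacc, rfl⟩
    refine ⟨?_, hp⟩
    rw [mem_derivedSet, Ordinal.accPt_subtype _ hp, hpre]
    exact hacc
  · rintro ⟨hd, hx⟩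
    refine ⟨⟨x, hx⟩, ?_, rfl⟩
    rw [mem_derivedSet] at hd ⊢
    rwa [Ordinal.accPt_subtype _ hx, hpre] at hd

/-- The γ-th "layer": nonzero multiples of `ω^γ` that are `≤ a`. -/
def Dset (a γ : Ordinal) : Set Ordinal := {x | x ≠ 0 ∧ x ≤ a ∧ (omega0 ^ γ) ∣ x}

lemma dvd_sub'' {a b c : Ordinal} (h1 : c ∣ a) (h2 : c ∣ b) : c ∣ a - b := by
  obtain ⟨m, rfl⟩ := h1
  obtain ⟨n, rfl⟩ := h2
  exact ⟨m - n, by rw [Ordinal.mul_sub]⟩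

lemma acc_mul_omega {c x : Ordinal} (hc : c ≠ 0)
    (h : ∀ p < x, ∃ s, c ∣ s ∧ p < s ∧ s < x) : c * omega0 ∣ x := by
  have hc0 : 0 < c := pos_iff_ne_zero.2 hc
  have hcw : c * omega0 ≠ 0 := mul_ne_zero hc omega0_ne_zero
  obtain ⟨q, r, hx, hr⟩ : ∃ q r, c * omega0 * q + r = x ∧ r < c * omega0 :=
    ⟨_, _, Ordinal.div_add_mod x _, Ordinal.mod_lt x hcw⟩
  rcases eq_or_ne r 0 with rfl | h0
  · exact ⟨q, by rw [← hx, add_zero]⟩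
  exfalso
  obtain ⟨n, r', hrn, hr'c, hnw⟩ : ∃ n r', c * n + r' = r ∧ r' < c ∧ n < omega0 :=
    ⟨_, _, Ordinal.div_add_mod r c, Ordinal.mod_lt r hc, (Ordinal.div_lt hc).2 hr⟩
  obtain ⟨t, u, hu0, huc, hxtu⟩ : ∃ t u, 0 < u ∧ u ≤ c ∧ x = c * t + u := by
    rcases eq_or_ne r' 0 with rfl | h1
    · have hn0 : n ≠ 0 := by
        rintro rfl
        rw [mul_zero, zero_add] at hrn
        exact h0 hrn.symm
      obtain ⟨k, rfl⟩ := Ordinal.lt_omega0.1 hnw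
      have hk0 : k ≠ 0 := by rintro rfl; exact hn0 (by simp)
      obtain ⟨k', rfl⟩ := Nat.exists_eq_succ_of_ne_zero hk0
      refine ⟨omega0 * q + (k' : Ordinal), c, hc0, le_rfl, ?_⟩
      rw [← hx, ← hrn, add_zero, mul_add, ← mul_assoc]
      rw [show ((Nat.succ k' : ℕ) : Ordinal) = (k' : Ordinal) + 1 by push_cast; ring_nf,
        mul_add, mul_one, add_assoc]
    · refine ⟨omega0 * q + n, r', pos_iff_ne_zero.2 h1, hr'c.le, ?_⟩
      rw [← hx, ← hrn, mul_add, ← mul_assoc, add_assoc]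
  obtain ⟨s, ⟨m, rfl⟩, hps, hsx⟩ := h (c * t)
    (by rw [hxtu]; simpa using (add_lt_add_iff_left (c * t)).2 hu0)
  have h1 : t < m := (mul_lt_mul_iff_right₀ hc0).1 hps
  have h2 : m < t + 1 := by
    refine (mul_lt_mul_iff_right₀ hc0).1 ?_
    calc c * m < c * t + u := hxtu ▸ hsx
    _ ≤ c * t + c := add_le_add_right huc _
    _ = c * (t + 1) := by rw [mul_add, mul_one]
  rw [Ordinal.add_one_eq_succ, Order.lt_succ_iff] at h2
  exact absurd h1 (not_lt.2 h2)

lemma derivedSet_Dset (a γ : Ordinal) : derivedSet (Dset a γ) = Dset a (γ + 1) := by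
  have hc : (omega0 ^ γ : Ordinal) ≠ 0 := Ordinal.opow_ne_zero γ omega0_ne_zero
  have hc0 : (0 : Ordinal) < omega0 ^ γ := pos_iff_ne_zero.2 hc
  ext x
  rw [mem_derivedSet]
  rw [show AccPt x (𝓟 (Dset a γ)) ↔ _ from Ordinal.isAcc_iff x _]
  constructor
  · rintro ⟨hx0, hacc⟩
    have hxa : x ≤ a := by
      by_contra hlt
      push_neg at hlt
      obtain ⟨s, hs, hsIoo⟩ := hacc a hlt
      exact absurd hs.2.1 (not_le.2 hsIoo.1)
    refine ⟨hx0, hxa, ?_⟩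
    rw [opow_add, opow_one]
    apply acc_mul_omega hc
    intro p hp
    obtain ⟨s, hs, hso⟩ := hacc p hp
    exact ⟨s, hs.2.2, hso.1, hso.2⟩
  · rintro ⟨hx0, hxa, hdvd⟩
    refine ⟨hx0, fun p hp => ?_⟩
    obtain ⟨q, hq⟩ := hdvd
    have hq0 : q ≠ 0 := by rintro rfl; rw [mul_zero] at hq; exact hx0 hq
    have hxeq : x = omega0 ^ γ * (omega0 * q) := by
      rw [hq, opow_add, opow_one, mul_assoc]
    have hlim : IsSuccLimit (omega0 * q) :=
      Ordinal.isSuccLimit_mul_left Ordinal.isSuccLimit_omega0 (pos_iff_ne_zero.2 hq0)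
    set s := omega0 ^ γ * (p / omega0 ^ γ + 1) with hsdef
    have hps : p < s := by
      have := Ordinal.lt_mul_succ_div p hc
      rwa [← Ordinal.add_one_eq_succ] at this
    have hsx : s < x := by
      rw [hxeq]
      refine (mul_lt_mul_iff_right₀ hc0).2 ?_
      have hdlt : p / omega0 ^ γ < omega0 * q := (Ordinal.div_lt hc).2 (hxeq ▸ hp)
      have := hlim.succ_lt hdlt
      rwa [← Ordinal.add_one_eq_succ] at this
    refine ⟨s, ⟨?_, hsx.le.trans hxa, ⟨_, rfl⟩⟩, hps, hsx⟩
    exact pos_iff_ne_zero.1 ((zero_le : (0 : Ordinal) ≤ p).trans_lt hps)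

lemma derivedSet_singleton_zero : derivedSet ({0} : Set Ordinal) = ∅ := by
  ext x
  simp only [Set.mem_empty_iff_false, iff_false, mem_derivedSet]
  intro h
  obtain ⟨hx0, hacc⟩ := (Ordinal.isAcc_iff x _).1 h
  obtain ⟨s, hs0, hsIoo⟩ := hacc 0 (pos_iff_ne_zero.2 hx0)
  rw [Set.mem_singleton_iff] at hs0
  exact absurd hsIoo.1 (by simp [hs0])

lemma Iic_eq_Dset_union (a : Ordinal) : Set.Iic a = Dset a 0 ∪ {0} := by
  ext x
  simp only [Set.mem_Iic, Dset, Set.mem_union, Set.mem_singleton_iff, Set.mem_setOf_eq,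
    opow_zero, one_dvd, and_true]
  constructor
  · intro hx
    rcases eq_or_ne x 0 with rfl | h
    · exact Or.inr rfl
    · exact Or.inl ⟨h, hx⟩
  · rintro (⟨-, hx⟩ | rfl)
    · exact hx
    · exact (zero_le : (0 : Ordinal) ≤ a)

lemma derivedSet_Iic (a : Ordinal) : derivedSet (Set.Iic a) = Dset a 1 := by
  rw [Iic_eq_Dset_union, derivedSet_union, derivedSet_singleton_zero, Set.union_empty,
    derivedSet_Dset, zero_add]

lemma opow_dvd_of_forall_lt {x o : Ordinal} (ho : IsSuccLimit o) (h : ∀ δ < o, omega0 ^ δ ∣ x) :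
    omega0 ^ o ∣ x := by
  have hc : (omega0 ^ o : Ordinal) ≠ 0 := Ordinal.opow_ne_zero o omega0_ne_zero
  rcases eq_or_ne (x % omega0 ^ o) 0 with h0 | h0
  · have hdm := Ordinal.div_add_mod x (omega0 ^ o)
    rw [h0, add_zero] at hdm
    exact ⟨_, hdm.symm⟩
  exfalso
  have hro : x % omega0 ^ o < omega0 ^ o := Ordinal.mod_lt x hc
  obtain ⟨δ, hδo, hrδ⟩ := (Ordinal.lt_opow_of_isSuccLimit omega0_ne_zero ho).1 hro
  have h3 : omega0 ^ δ ∣ x % omega0 ^ o := by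
    rw [Ordinal.mod_def]
    exact dvd_sub'' (h δ hδo) ((Ordinal.opow_dvd_opow _ hδo.le).mul_right _)
  exact absurd (Ordinal.le_of_dvd h0 h3) (not_le.2 hrδ)

/-- The CB derivatives of the space of ordinals `< a + 1`, i.e. `≤ a`. -/
lemma cbIter_Iio (a γ : Ordinal) :
    Subtype.val '' cbIter (↥(Set.Iio (a + 1))) γ
      = if γ = 0 then Set.Iic a else Dset a γ := by
  induction γ using Ordinal.limitRecOn with
  | zero =>
      rw [cbIter_zero, if_pos rfl, Set.image_univ, Subtype.range_coe_subtype]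
      ext x
      simp [Order.lt_add_one_iff]
  | add_one γ ih =>
      have hsub : Dset a (γ + 1) ∩ Set.Iio (a + 1) = Dset a (γ + 1) := by
        refine Set.inter_eq_left.2 fun x hx => ?_
        exact lt_of_le_of_lt hx.2.1 (lt_add_one a)
      rw [Ordinal.add_one_eq_succ γ, cbIter_succ, image_derivedSet_Iio, ih, if_neg (Ordinal.succ_ne_zero γ),
        ← Ordinal.add_one_eq_succ]
      rcases eq_or_ne γ 0 with rfl | hγ
      · rw [zero_add] at hsub
        rw [if_pos rfl, derivedSet_Iic, hsub, zero_add]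
      · rw [if_neg hγ, derivedSet_Dset, hsub]
  | limit o ho ih =>
      have hne : Nonempty ↥(Set.Iio o) := ⟨⟨0, ho.pos⟩⟩
      have hbi : (⋂ (δ : Ordinal) (_ : δ < o), cbIter (↥(Set.Iio (a + 1))) δ)
          = ⋂ (δ : ↥(Set.Iio o)), cbIter (↥(Set.Iio (a + 1))) δ.1 :=
        Set.biInter_eq_iInter (Set.Iio o) _
      rw [cbIter_limit ho, if_neg ho.pos.ne', hbi,
        Set.InjOn.image_iInter_eq (Subtype.val_injective.injOn)]
      ext x
      simp only [Set.mem_iInter, Subtype.forall, Set.mem_Iio]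
      constructor
      · intro hx
        have h1 := hx 1 (Ordinal.one_lt_of_isSuccLimit ho)
        rw [ih 1 (Ordinal.one_lt_of_isSuccLimit ho), if_neg one_ne_zero] at h1
        refine ⟨h1.1, h1.2.1, opow_dvd_of_forall_lt ho fun δ hδ => ?_⟩
        have h2 := hx δ hδ
        rw [ih δ hδ] at h2
        rcases eq_or_ne δ 0 with rfl | hδ0
        · simp
        · rw [if_neg hδ0] at h2
          exact h2.2.2
      · rintro ⟨hx0, hxa, hdvd⟩ δ hδ
        rw [ih δ hδ]
        rcases eq_or_ne δ 0 with rfl | hδ0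
        · rw [if_pos rfl]; exact hxa
        · rw [if_neg hδ0]
          exact ⟨hx0, hxa, (Ordinal.opow_dvd_opow _ hδ.le).trans hdvd⟩

lemma aux_not_lt (α β : Ordinal)
    (f : ↥(Set.Iio (omega0 ^ α + 1)) ≃ₜ ↥(Set.Iio (omega0 ^ β + 1))) : ¬ α < β := by
  intro hab
  have h1 := cbIter_Iio (omega0 ^ α) (α + 1)
  have h2 := cbIter_Iio (omega0 ^ β) (α + 1)
  have h3 := cbIter_image f (α + 1)
  have hne : (α + 1 : Ordinal) ≠ 0 := by
    rw [Ordinal.add_one_eq_succ]; exact Ordinal.succ_ne_zero α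
  rw [if_neg hne] at h1 h2
  have e1 : cbIter (↥(Set.Iio (omega0 ^ α + 1))) (α + 1) = ∅ := by
    rw [← Set.image_eq_empty (f := (Subtype.val : _ → Ordinal)), h1]
    ext x
    simp only [Dset, Set.mem_setOf_eq, Set.mem_empty_iff_false, iff_false, not_and]
    intro hx0 hxa
    intro hdvd
    have := Ordinal.le_of_dvd hx0 hdvd
    have h4 : (omega0 : Ordinal) ^ α < omega0 ^ (α + 1) :=
      (Ordinal.opow_lt_opow_iff_right Ordinal.one_lt_omega0).2 (lt_add_one α)
    exact absurd (this.trans hxa) (not_le.2 h4)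
  rw [e1, Set.image_empty] at h3
  have hmem : (omega0 ^ β : Ordinal) ∈ Dset (omega0 ^ β) (α + 1) := by
    refine ⟨Ordinal.opow_ne_zero β omega0_ne_zero, le_rfl, Ordinal.opow_dvd_opow _ ?_⟩
    rw [Ordinal.add_one_eq_succ]
    exact Order.succ_le_of_lt hab
  rw [← h2, ← h3] at hmem
  simp at hmem

end OrdinalSide

set_option linter.unusedVariables false in
/-- For countable ordinals `α`, `β`, the ordinal spaces `ω^α + 1` and `ω^β + 1` (the sets of
ordinals `≤ ω^α`, `≤ ω^β`, with the order topology) are homeomorphic iff `α = β`. -/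
theorem omega_pow_succ_homeo_iff (α β : Ordinal) (hα : α.card ≤ Cardinal.aleph0)
    (hβ : β.card ≤ Cardinal.aleph0) :
    Nonempty (↥(Set.Iic (omega0 ^ α)) ≃ₜ ↥(Set.Iic (omega0 ^ β))) ↔ α = β := by
  have hset : ∀ g : Ordinal, Set.Iic (omega0 ^ g) = Set.Iio (omega0 ^ g + 1) := by
    intro g
    rw [Ordinal.add_one_eq_succ, Order.Iio_succ]
  rw [hset α, hset β]
  constructor
  · rintro ⟨f⟩
    exact le_antisymm (not_lt.1 (aux_not_lt β α f.symm)) (not_lt.1 (aux_not_lt α β f))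
  · rintro rfl
    exact ⟨Homeomorph.refl _⟩
end

section
/- (Guessing geodesics criterion) Let X be a connected graph with its combinatorial metric. Suppose that to every pair of vertices x, y there is assigned a connected subgraph A(x,y) containing x and y, and there exists M > 0 such that: (1) whenever d(x,y) ≤ 1, the subgraph A(x,y) has diameter at most M; and (2) for all vertices x, y, z, the subgraph A(x,y) is contained in the M-neighbourhood of A(x,z) ∪ A(y,z). Then X is δ-hyperbolic for some δ depending only on M. -/
open SimpleGraph

namespace GuessGeo

variable {V : Type} {G : SimpleGraph V}

private lemma list_min {α : Type} (f : α → ℕ) :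
    ∀ l : List α, l ≠ [] → ∃ a ∈ l, ∀ b ∈ l, f b ≥ f a := by
  intro l
  induction l with
  | nil => intro h; exact absurd rfl h
  | cons x xs ih =>
    intro _
    by_cases hxs : xs = []
    · subst hxs; exact ⟨x, by simp, by simp⟩
    · obtain ⟨a, ha, hmin⟩ := ih hxs
      by_cases hxa : f x ≤ f a
      · refine ⟨x, by simp, ?_⟩
        intro b hb
        rcases List.mem_cons.mp hb with rfl | hb
        · exact le_rfl
        · exact le_trans hxa (hmin b hb)
      · refine ⟨a, by simp [ha], ?_⟩
        intro b hb
        rcases List.mem_cons.mp hb with rfl | hb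
        · omega
        · exact hmin b hb

lemma exists_split {x y : V} (p : G.Walk x y) (k : ℕ) (hk : k ≤ p.length) :
    ∃ (z : V) (q : G.Walk x z) (r : G.Walk z y),
      q.length = k ∧ r.length = p.length - k ∧
      (∀ i, i ≤ k → q.getVert i = p.getVert i) ∧
      (∀ i, r.getVert i = p.getVert (k + i)) ∧
      (∀ v, v ∈ q.support → v ∈ p.support) ∧
      (∀ v, v ∈ r.support → v ∈ p.support) := by
  induction k generalizing x p with
  | zero =>
    refine ⟨x, .nil, p, rfl, by simp, ?_, by simp, ?_, fun v hv => hv⟩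
    · intro i hi
      interval_cases i
      simp [Walk.getVert_zero]
    · intro v hv
      simp only [Walk.support_nil, List.mem_singleton] at hv
      subst hv
      exact p.start_mem_support
  | succ k ih =>
    cases p with
    | nil => simp at hk
    | @cons _ x₂ _ h p' =>
      have hk' : k ≤ p'.length := by simpa using hk
      obtain ⟨z, q, r, h1, h2, h3, h4, h5, h6⟩ := ih p' hk'
      refine ⟨z, q.cons h, r, by simp [h1], by simp [h2], ?_, ?_, ?_, ?_⟩
      · intro i hi
        match i with
        | 0 => simp [Walk.getVert_zero]
        | (i+1) =>
          rw [Walk.getVert_cons_succ, Walk.getVert_cons_succ]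
          exact h3 i (by omega)
      · intro i
        have : (k + 1 + i) = (k + i) + 1 := by omega
        rw [this, Walk.getVert_cons_succ, h4]
      · intro v hv
        rw [Walk.support_cons] at hv
        rcases List.mem_cons.mp hv with rfl | hv
        · exact Walk.start_mem_support _
        · rw [Walk.support_cons]
          exact List.mem_cons_of_mem _ (h5 v hv)
      · intro v hv
        rw [Walk.support_cons]
        exact List.mem_cons_of_mem _ (h6 v hv)

lemma geodist (hconn : G.Connected) {x y : V} (γ : G.Walk x y)
    (hγ : γ.length = G.dist x y) {i k : ℕ} (hik : i ≤ k) (hk : k ≤ γ.length) :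
    G.dist (γ.getVert i) (γ.getVert k) = k - i := by
  obtain ⟨z, q, r, hq, hr, hqv, hrv, _, _⟩ := exists_split γ k hk
  have hz : z = γ.getVert k := by
    rw [← hqv k le_rfl, ← hq, Walk.getVert_length]
  obtain ⟨z', q1, q2, hq1, hq2, hq1v, _, _, _⟩ := exists_split q i (by omega)
  have hz' : z' = γ.getVert i := by
    rw [← hqv i hik, ← hq1v i le_rfl, ← hq1, Walk.getVert_length]
  have d1 : G.dist x z' ≤ i := by rw [← hq1]; exact dist_le q1
  have d2 : G.dist z' z ≤ k - i := by
    have := dist_le q2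
    omega
  have d3 : G.dist z y ≤ γ.length - k := by
    have := dist_le r
    omega
  have t1 : G.dist x y ≤ G.dist x z' + G.dist z' y := hconn.dist_triangle
  have t2 : G.dist z' y ≤ G.dist z' z + G.dist z y := hconn.dist_triangle
  rw [← hz, ← hz']
  omega

lemma sq_le_two_pow : ∀ c : ℕ, 5 ≤ c → c * c ≤ 2 ^ c := by
  intro c
  induction c with
  | zero => omega
  | succ c ih =>
    intro hc
    rcases Nat.lt_or_ge c 5 with h | h
    · have hc4 : c = 4 := by omega
      subst hc4; norm_num
    · have h0 := ih h
      have h1 : 2 ^ (c + 1) = 2 ^ c * 2 := pow_succ 2 c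
      have h2 : 2 * c + 1 ≤ c * c := by nlinarith
      have h3 : (c+1) * (c+1) = c * c + (2*c + 1) := by ring
      omega

lemma arith (M : ℕ) (hM : 0 < M) (r : ℕ) (hr : 2 ^ (8 * (M + 1)) + 1 ≤ r) :
    M * (Nat.clog 2 r + 6) < r := by
  set c := Nat.clog 2 r with hc
  have hr1 : 1 < r := by
    have : 1 ≤ 2 ^ (8 * (M + 1)) := Nat.one_le_two_pow
    omega
  have h1 : 2 ^ (c - 1) < r := Nat.pow_pred_clog_lt_self (by norm_num) hr1
  have h2 : 8 * (M + 1) + 1 ≤ c := by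
    by_contra hcon
    push_neg at hcon
    have e1 : r ≤ 2 ^ c := Nat.le_pow_clog (by norm_num) r
    have e2 : (2:ℕ) ^ c ≤ 2 ^ (8 * (M + 1)) := Nat.pow_le_pow_right (by norm_num) (by omega)
    omega
  have h3 : c * c ≤ 2 ^ c := sq_le_two_pow c (by omega)
  have h4 : 2 ^ c = 2 * 2 ^ (c - 1) := by
    rw [← pow_succ']
    congr 1
    omega
  have h5 : 8 * M ≤ c := by omega
  have h6 : 8 * (M * (c + 6)) ≤ c * (c + 6) := by
    calc 8 * (M * (c+6)) = (8*M) * (c+6) := by ring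
    _ ≤ c * (c+6) := Nat.mul_le_mul_right _ h5
  have h7 : c * (c + 6) ≤ 2 * (c * c) := by nlinarith
  -- 8 * X ≤ 2*(c*c) ≤ 2*2^c = 4*2^(c-1) ⇒ X ≤ 2^(c-1)/2 < r
  omega

lemma claim1 (hconn : G.Connected) (A : V → V → Set V) (M : ℕ)
    (hmem : ∀ x y, x ∈ A x y ∧ y ∈ A x y)
    (hdiam : ∀ x y, G.dist x y ≤ 1 → ∀ u ∈ A x y, ∀ v ∈ A x y, G.dist u v ≤ M)
    (hthin : ∀ x y z, ∀ u ∈ A x y, ∃ v ∈ A x z ∪ A y z, G.dist u v ≤ M) :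
    ∀ n : ℕ, ∀ a b : V, ∀ p : G.Walk a b, p.length ≤ 2 ^ n →
      ∀ u ∈ A a b, ∃ v ∈ p.support, G.dist u v ≤ M * (n + 1) := by
  intro n
  induction n with
  | zero =>
    intro a b p hp u hu
    refine ⟨a, p.start_mem_support, ?_⟩
    have h1 : G.dist a b ≤ 1 := le_trans (SimpleGraph.dist_le p) (by simpa using hp)
    simpa using hdiam a b h1 u hu a (hmem a b).1
  | succ n ih =>
    intro a b p hp u hu
    by_cases hle : p.length ≤ 2 ^ n
    · obtain ⟨v, hv, hd⟩ := ih a b p hle u hu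
      exact ⟨v, hv, le_trans hd (Nat.mul_le_mul_left M (by omega))⟩
    · push_neg at hle
      obtain ⟨z, q, r, hq, hr, _, _, hqs, hrs⟩ := exists_split p (2^n) (by omega)
      obtain ⟨v₁, hv₁, hd₁⟩ := hthin a b z u hu
      rcases hv₁ with hv₁ | hv₁
      · obtain ⟨v, hv, hd⟩ := ih a z q (le_of_eq hq) v₁ hv₁
        refine ⟨v, hqs v hv, ?_⟩
        have t : G.dist u v ≤ G.dist u v₁ + G.dist v₁ v := hconn.dist_triangle
        have : M * (n + 1 + 1) = M + M * (n + 1) := by ring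
        omega
      · have hrl : r.reverse.length ≤ 2 ^ n := by
          rw [Walk.length_reverse, hr]
          have h2 : (2:ℕ) ^ (n+1) = 2 ^ n * 2 := pow_succ 2 n
          omega
        obtain ⟨v, hv, hd⟩ := ih b z r.reverse hrl v₁ hv₁
        rw [Walk.support_reverse, List.mem_reverse] at hv
        refine ⟨v, hrs v hv, ?_⟩
        have t : G.dist u v ≤ G.dist u v₁ + G.dist v₁ v := hconn.dist_triangle
        have : M * (n + 1 + 1) = M + M * (n + 1) := by ring
        omega

lemma claim2 (hconn : G.Connected) (A : V → V → Set V) (M : ℕ) (hM : 0 < M)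
    (hmem : ∀ x y, x ∈ A x y ∧ y ∈ A x y)
    (hdiam : ∀ x y, G.dist x y ≤ 1 → ∀ u ∈ A x y, ∀ v ∈ A x y, G.dist u v ≤ M)
    (hthin : ∀ x y z, ∀ u ∈ A x y, ∃ v ∈ A x z ∪ A y z, G.dist u v ≤ M)
    (L : ℕ) :
    ∀ x y : V, ∀ γ : G.Walk x y, γ.length = L → G.dist x y = L →
      ∀ u ∈ A x y, ∃ w ∈ γ.support, G.dist u w ≤ 2 ^ (8 * (M + 1)) := by
  induction L using Nat.strong_induction_on with
  | _ L IH =>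
  intro x y γ hγlen hγdist u hu
  set Δ : ℕ := 2 ^ (8 * (M + 1)) with hΔdef
  have hgeo : γ.length = G.dist x y := by rw [hγlen, hγdist]
  -- helper numeric facts : 3*M ≤ Δ
  have hMΔ : 3 * M ≤ Δ := by
    have h1 : M < 2 ^ M := Nat.lt_two_pow_self (n := M)
    have h2 : (2:ℕ) ^ (M + 2) ≤ 2 ^ (8 * (M + 1)) := Nat.pow_le_pow_right (by norm_num) (by omega)
    have h3 : (2:ℕ) ^ (M + 2) = 2 ^ M * 4 := by rw [pow_add]; norm_num
    omega
  by_contra hcon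
  push_neg at hcon
  obtain ⟨w₀, hw₀s, hw₀min⟩ := list_min (fun w => G.dist u w) γ.support γ.support_ne_nil
  set r := G.dist u w₀ with hrdef
  have hrΔ : Δ + 1 ≤ r := hcon w₀ hw₀s
  obtain ⟨j, hjv, hjL⟩ := (Walk.mem_support_iff_exists_getVert).mp hw₀s
  set D := r + 2*M + Δ + 1 with hDdef
  set ia := j - D with hiadef
  set ib := min (j + D) L with hibdef
  have hiaL : ia ≤ γ.length := by omega
  obtain ⟨a, q1, r1, hq1len, hr1len, hq1v, hr1v, hq1s, hr1s⟩ := exists_split γ ia hiaL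
  have ha : a = γ.getVert ia := by
    rw [← hq1v ia le_rfl, ← hq1len, Walk.getVert_length]
  have hk2 : ib - ia ≤ r1.length := by omega
  obtain ⟨b, q2, r2, hq2len, hr2len, hq2v, hr2v, hq2s, hr2s⟩ := exists_split r1 (ib - ia) hk2
  have hiaib : ia ≤ ib := by omega
  have hb : b = γ.getVert ib := by
    have h1 : q2.getVert q2.length = b := Walk.getVert_length q2
    rw [hq2len] at h1
    have h2 := hr1v (ib - ia)
    have h3 : ia + (ib - ia) = ib := by omega
    rw [← h1, hq2v (ib - ia) le_rfl, h2, h3]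
  -- first thinness
  obtain ⟨v₁, hv₁, hd₁⟩ := hthin x y a u hu
  rcases hv₁ with hv₁ | hv₁
  · -- v₁ ∈ A x a
    by_cases hjD : j < D
    · have hax : a = x := by
        rw [ha]
        have h0 : ia = 0 := by omega
        rw [h0, Walk.getVert_zero]
      rw [hax] at hv₁
      have h1 : G.dist v₁ x ≤ M := hdiam x x (by rw [SimpleGraph.dist_self]; omega) v₁ hv₁ x (hmem x x).1
      have t1 : G.dist u x ≤ G.dist u v₁ + G.dist v₁ x := hconn.dist_triangle
      have := hw₀min x γ.start_mem_support
      omega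
    · push_neg at hjD
      have hiaL' : ia < L := by omega
      have hdxa : G.dist x a = ia := by
        rw [ha]
        have h0 := geodist hconn γ hgeo (i := 0) (k := ia) (by omega) hiaL
        rw [Walk.getVert_zero] at h0
        omega
      obtain ⟨c, hcs, hdc⟩ := IH ia hiaL' x a q1 hq1len hdxa v₁ hv₁
      obtain ⟨i, hiv, hiq⟩ := Walk.mem_support_iff_exists_getVert.mp hcs
      have hci : c = γ.getVert i := by
        rw [← hiv, hq1v i (by omega)]
      have hdcw : G.dist c w₀ = j - i := by
        rw [hci, ← hjv]
        exact geodist hconn γ hgeo (by omega) (by omega)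
      have hrc : r ≤ G.dist u c := hw₀min c (hq1s c hcs)
      have t1 : G.dist c w₀ ≤ G.dist c v₁ + G.dist v₁ w₀ := hconn.dist_triangle
      have t2 : G.dist v₁ w₀ ≤ G.dist v₁ u + G.dist u w₀ := hconn.dist_triangle
      have c1 : G.dist c v₁ = G.dist v₁ c := SimpleGraph.dist_comm ..
      have c2 : G.dist v₁ u = G.dist u v₁ := SimpleGraph.dist_comm ..
      have hiq' : i ≤ ia := by omega
      omega
  · -- v₁ ∈ A y a
    obtain ⟨v₂, hv₂, hd₂⟩ := hthin y a b v₁ hv₁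
    have t0 : G.dist u v₂ ≤ G.dist u v₁ + G.dist v₁ v₂ := hconn.dist_triangle
    rcases hv₂ with hv₂ | hv₂
    · -- v₂ ∈ A y b
      by_cases hjD : L ≤ j + D
      · have hby : b = y := by
          rw [hb]
          have h0 : ib = L := by omega
          rw [h0, ← hγlen, Walk.getVert_length]
        rw [hby] at hv₂
        have h1 : G.dist v₂ y ≤ M := hdiam y y (by rw [SimpleGraph.dist_self]; omega) v₂ hv₂ y (hmem y y).1
        have t1 : G.dist u y ≤ G.dist u v₂ + G.dist v₂ y := hconn.dist_triangle
        have := hw₀min y γ.end_mem_support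
        omega
      · push_neg at hjD
        have hib' : ib = j + D := by omega
        have hibL : ib < L := by omega
        have hdby : G.dist b y = L - ib := by
          rw [hb]
          have h0 := geodist hconn γ hgeo (i := ib) (k := γ.length) (by omega) le_rfl
          rw [Walk.getVert_length] at h0
          omega
        have hdyb : G.dist y b = L - ib := by rw [SimpleGraph.dist_comm]; exact hdby
        have hr2rev : r2.reverse.length = L - ib := by
          rw [Walk.length_reverse]
          omega
        obtain ⟨c, hcs, hdc⟩ := IH (L - ib) (by omega) y b r2.reverse hr2rev hdyb v₂ hv₂
        rw [Walk.support_reverse, List.mem_reverse] at hcs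
        obtain ⟨i, hiv, hiq⟩ := Walk.mem_support_iff_exists_getVert.mp hcs
        have hir2 : i ≤ L - ib := by omega
        have hci : c = γ.getVert (ib + i) := by
          rw [← hiv, hr2v i, hr1v ((ib - ia) + i)]
          congr 1
          omega
        have hdcw : G.dist w₀ c = ib + i - j := by
          rw [hci, ← hjv]
          exact geodist hconn γ hgeo (by omega) (by omega)
        have hrc : r ≤ G.dist u c := hw₀min c (hr1s c (hr2s c hcs))
        have t1 : G.dist w₀ c ≤ G.dist w₀ u + G.dist u c := hconn.dist_triangle
        have t2 : G.dist u c ≤ G.dist u v₂ + G.dist v₂ c := hconn.dist_triangle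
        have c1 : G.dist w₀ u = G.dist u w₀ := SimpleGraph.dist_comm ..
        have c2 : G.dist v₂ c = G.dist c v₂ := SimpleGraph.dist_comm ..
        have c3 : G.dist c v₂ = G.dist v₂ c := SimpleGraph.dist_comm ..
        omega
    · -- v₂ ∈ A a b : middle case
      set n := Nat.clog 2 r + 3 with hn
      have hq2len2 : q2.length ≤ 2 ^ n := by
        have h1 : r ≤ 2 ^ Nat.clog 2 r := Nat.le_pow_clog (by norm_num) r
        have h2 : (2:ℕ) ^ n = 2 ^ Nat.clog 2 r * 8 := by rw [hn, pow_add]; norm_num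
        omega
      obtain ⟨c, hcs, hdc⟩ := claim1 hconn A M hmem hdiam hthin n a b q2 hq2len2 v₂ hv₂
      have hcγ : c ∈ γ.support := hr1s c (hq2s c hcs)
      have hrc : r ≤ G.dist u c := hw₀min c hcγ
      have t2 : G.dist u c ≤ G.dist u v₂ + G.dist v₂ c := hconn.dist_triangle
      have harith := arith M hM r (by omega)
      have hexp : M * (n + 1) = M * (Nat.clog 2 r + 4) := by rw [hn]
      have hfin : M * (Nat.clog 2 r + 6) = M * (Nat.clog 2 r + 4) + 2 * M := by ring
      omega

lemma claim3 (hconn : G.Connected) (A : V → V → Set V) (M : ℕ) (hM : 0 < M)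
    (hmem : ∀ x y, x ∈ A x y ∧ y ∈ A x y)
    (hconnA : ∀ x y : V, (G.induce (A x y)).Connected)
    (hdiam : ∀ x y, G.dist x y ≤ 1 → ∀ u ∈ A x y, ∀ v ∈ A x y, G.dist u v ≤ M)
    (hthin : ∀ x y z, ∀ u ∈ A x y, ∃ v ∈ A x z ∪ A y z, G.dist u v ≤ M)
    {x y : V} (γ : G.Walk x y) (hγ : γ.length = G.dist x y) :
    ∀ w ∈ γ.support, ∃ u ∈ A x y, G.dist w u ≤ 3 * 2 ^ (8 * (M + 1)) + 1 := by
  classical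
  set Δ : ℕ := 2 ^ (8 * (M + 1)) with hΔdef
  have key : ∀ u, u ∈ A x y → ∃ i, i ≤ γ.length ∧ G.dist u (γ.getVert i) ≤ Δ := by
    intro u hu
    obtain ⟨w, hw, hd⟩ := claim2 hconn A M hM hmem hdiam hthin (G.dist x y) x y γ hγ rfl u hu
    obtain ⟨i, hiv, hiL⟩ := Walk.mem_support_iff_exists_getVert.mp hw
    exact ⟨i, hiL, by rw [hiv]; exact hd⟩
  set F : V → ℕ := fun u => if h : u ∈ A x y then (key u h).choose else 0 with hFdef
  have hF : ∀ u (h : u ∈ A x y), F u ≤ γ.length ∧ G.dist u (γ.getVert (F u)) ≤ Δ := by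
    intro u h
    have : F u = (key u h).choose := by rw [hFdef]; simp only [dif_pos h]
    rw [this]
    exact (key u h).choose_spec
  have hstep : ∀ u u', u ∈ A x y → u' ∈ A x y → G.Adj u u' →
      F u' ≤ F u + (2*Δ+1) ∧ F u ≤ F u' + (2*Δ+1) := by
    intro u u' hu hu' hadj
    have h1 := hF u hu
    have h2 := hF u' hu'
    have hd : G.dist u u' = 1 := dist_eq_one_iff_adj.mpr hadj
    have t1 : G.dist (γ.getVert (F u)) (γ.getVert (F u')) ≤
        G.dist (γ.getVert (F u)) u + (G.dist u u' + G.dist u' (γ.getVert (F u'))) := by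
      have a1 : G.dist (γ.getVert (F u)) (γ.getVert (F u')) ≤
          G.dist (γ.getVert (F u)) u + G.dist u (γ.getVert (F u')) := hconn.dist_triangle
      have a2 : G.dist u (γ.getVert (F u')) ≤ G.dist u u' + G.dist u' (γ.getVert (F u')) :=
        hconn.dist_triangle
      omega
    have c1 : G.dist (γ.getVert (F u)) u = G.dist u (γ.getVert (F u)) := SimpleGraph.dist_comm ..
    rcases le_total (F u) (F u') with h | h
    · have := geodist hconn γ hγ h h2.1
      omega
    · have := geodist hconn γ hγ h h1.1
      have c2 : G.dist (γ.getVert (F u)) (γ.getVert (F u')) =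
          G.dist (γ.getVert (F u')) (γ.getVert (F u)) := SimpleGraph.dist_comm ..
      omega
  have ivt : ∀ (s t : ↥(A x y)) (P : (G.induce (A x y)).Walk s t) (j : ℕ),
      F ↑s ≤ j → j ≤ F ↑t → ∃ u, u ∈ A x y ∧ F u ≤ j + (2*Δ+1) ∧ j ≤ F u + (2*Δ+1) := by
    intro s t P
    induction P with
    | @nil s => exact fun j h1 h2 => ⟨↑s, s.2, by omega, by omega⟩
    | @cons s v t h P ih =>
      intro j h1 h2
      have hadj : G.Adj ↑s ↑v := h
      by_cases hj : j ≤ F ↑v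
      · have := hstep ↑s ↑v s.2 v.2 hadj
        exact ⟨↑v, v.2, by omega, by omega⟩
      · exact ih j (by omega) h2
  intro w hw
  obtain ⟨j, hjv, hjL⟩ := Walk.mem_support_iff_exists_getVert.mp hw
  have hxA := (hmem x y).1
  have hyA := (hmem x y).2
  have hFx : F x ≤ Δ := by
    have h := hF x hxA
    have h0 := geodist hconn γ hγ (i := 0) (k := F x) (by omega) h.1
    rw [Walk.getVert_zero] at h0
    omega
  have hFy : γ.length ≤ F y + Δ := by
    have h := hF y hyA
    have h0 := geodist hconn γ hγ (i := F y) (k := γ.length) h.1 le_rfl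
    rw [Walk.getVert_length] at h0
    have c : G.dist y (γ.getVert (F y)) = G.dist (γ.getVert (F y)) y := SimpleGraph.dist_comm ..
    omega
  by_cases h1 : j ≤ F x
  · refine ⟨x, hxA, ?_⟩
    have h0 := geodist hconn γ hγ (i := 0) (k := j) (by omega) hjL
    rw [Walk.getVert_zero, hjv] at h0
    have c : G.dist x w = G.dist w x := SimpleGraph.dist_comm ..
    omega
  by_cases h2 : F y ≤ j
  · refine ⟨y, hyA, ?_⟩
    have h0 := geodist hconn γ hγ (i := j) (k := γ.length) hjL le_rfl
    rw [Walk.getVert_length, hjv] at h0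
    omega
  obtain ⟨P⟩ := (hconnA x y).preconnected ⟨x, hxA⟩ ⟨y, hyA⟩
  obtain ⟨u, hu, hb1, hb2⟩ := ivt ⟨x, hxA⟩ ⟨y, hyA⟩ P j (by show F x ≤ j; omega) (by show j ≤ F y; omega)
  refine ⟨u, hu, ?_⟩
  have hFu := hF u hu
  have tri : G.dist w u ≤ G.dist w (γ.getVert (F u)) + G.dist (γ.getVert (F u)) u :=
    hconn.dist_triangle
  have c1 : G.dist (γ.getVert (F u)) u = G.dist u (γ.getVert (F u)) := SimpleGraph.dist_comm ..
  rcases le_total j (F u) with h | h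
  · have h0 := geodist hconn γ hγ h hFu.1
    rw [hjv] at h0
    omega
  · have h0 := geodist hconn γ hγ h hjL
    rw [hjv] at h0
    have c2 : G.dist w (γ.getVert (F u)) = G.dist (γ.getVert (F u)) w := SimpleGraph.dist_comm ..
    omega

lemma slim (hconn : G.Connected) (A : V → V → Set V) (M : ℕ) (hM : 0 < M)
    (hmem : ∀ x y, x ∈ A x y ∧ y ∈ A x y)
    (hconnA : ∀ x y : V, (G.induce (A x y)).Connected)
    (hdiam : ∀ x y, G.dist x y ≤ 1 → ∀ u ∈ A x y, ∀ v ∈ A x y, G.dist u v ≤ M)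
    (hthin : ∀ x y z, ∀ u ∈ A x y, ∃ v ∈ A x z ∪ A y z, G.dist u v ≤ M)
    {x y z : V} (γxy : G.Walk x y) (γxz : G.Walk x z) (γyz : G.Walk y z)
    (h1 : γxy.length = G.dist x y) (h2 : γxz.length = G.dist x z)
    (h3 : γyz.length = G.dist y z) :
    ∀ w ∈ γxy.support, ∃ p, (p ∈ γxz.support ∨ p ∈ γyz.support) ∧
      G.dist w p ≤ 4 * 2 ^ (8 * (M + 1)) + M + 1 := by
  intro w hw
  obtain ⟨u, hu, hdu⟩ := claim3 hconn A M hM hmem hconnA hdiam hthin γxy h1 w hw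
  obtain ⟨v, hv, hdv⟩ := hthin x y z u hu
  rcases hv with hv | hv
  · obtain ⟨c, hc, hdc⟩ := claim2 hconn A M hM hmem hdiam hthin (G.dist x z) x z γxz h2 rfl v hv
    refine ⟨c, Or.inl hc, ?_⟩
    have t1 : G.dist w c ≤ G.dist w u + (G.dist u v + G.dist v c) := by
      have a1 : G.dist w c ≤ G.dist w u + G.dist u c := hconn.dist_triangle
      have a2 : G.dist u c ≤ G.dist u v + G.dist v c := hconn.dist_triangle
      omega
    omega
  · obtain ⟨c, hc, hdc⟩ := claim2 hconn A M hM hmem hdiam hthin (G.dist y z) y z γyz h3 rfl v hv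
    refine ⟨c, Or.inr hc, ?_⟩
    have t1 : G.dist w c ≤ G.dist w u + (G.dist u v + G.dist v c) := by
      have a1 : G.dist w c ≤ G.dist w u + G.dist u c := hconn.dist_triangle
      have a2 : G.dist u c ≤ G.dist u v + G.dist v c := hconn.dist_triangle
      omega
    omega

lemma lem_i (hconn : G.Connected) {y z : V} (w : V) (γ : G.Walk y z)
    (hγ : γ.length = G.dist y z) :
    ∀ p ∈ γ.support, G.dist w y + G.dist w z ≤ 2 * G.dist w p + G.dist y z := by
  intro p hp
  obtain ⟨t, htv, htL⟩ := Walk.mem_support_iff_exists_getVert.mp hp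
  have h1 : G.dist y p = t := by
    rw [← htv]
    have h0 := geodist hconn γ hγ (i := 0) (k := t) (by omega) htL
    rw [Walk.getVert_zero] at h0
    omega
  have h2 : G.dist p z = γ.length - t := by
    rw [← htv]
    have h0 := geodist hconn γ hγ (i := t) (k := γ.length) htL le_rfl
    rw [Walk.getVert_length] at h0
    omega
  have t1 : G.dist w y ≤ G.dist w p + G.dist p y := hconn.dist_triangle
  have t2 : G.dist w z ≤ G.dist w p + G.dist p z := hconn.dist_triangle
  have c1 : G.dist p y = G.dist y p := SimpleGraph.dist_comm ..
  omega

lemma lem_ii (hconn : G.Connected) (A : V → V → Set V) (M : ℕ) (hM : 0 < M)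
    (hmem : ∀ x y, x ∈ A x y ∧ y ∈ A x y)
    (hconnA : ∀ x y : V, (G.induce (A x y)).Connected)
    (hdiam : ∀ x y, G.dist x y ≤ 1 → ∀ u ∈ A x y, ∀ v ∈ A x y, G.dist u v ≤ M)
    (hthin : ∀ x y z, ∀ u ∈ A x y, ∃ v ∈ A x z ∪ A y z, G.dist u v ≤ M)
    (w : V) {y z : V} (γ : G.Walk y z) (hγ : γ.length = G.dist y z) :
    ∃ p ∈ γ.support, 2 * G.dist w p + G.dist y z ≤
      G.dist w y + G.dist w z + (4 * (4 * 2 ^ (8 * (M + 1)) + M + 1) + 2) := by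
  set δ₀ : ℕ := 4 * 2 ^ (8 * (M + 1)) + M + 1 with hδ₀
  obtain ⟨γyw, hγyw⟩ := hconn.exists_walk_length_eq_dist y w
  obtain ⟨γzw, hγzw⟩ := hconn.exists_walk_length_eq_dist z w
  have htr0 : G.dist z w ≤ G.dist z y + G.dist y w := hconn.dist_triangle
  have htr1 : G.dist y w ≤ G.dist y z + G.dist z w := hconn.dist_triangle
  have czy : G.dist z y = G.dist y z := SimpleGraph.dist_comm ..
  have cwy : G.dist w y = G.dist y w := SimpleGraph.dist_comm ..
  have cwz : G.dist w z = G.dist z w := SimpleGraph.dist_comm ..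
  obtain ⟨t, htle, htlow, hthigh⟩ : ∃ t, t ≤ γ.length ∧
      G.dist y z + G.dist y w ≤ 2*t + G.dist z w + 1 ∧
      2*t + G.dist z w ≤ G.dist y z + G.dist y w := by
    refine ⟨(G.dist y z + G.dist y w - G.dist z w) / 2, by omega, by omega, by omega⟩
  have hps : γ.getVert t ∈ γ.support := Walk.mem_support_iff_exists_getVert.mpr ⟨t, rfl, htle⟩
  obtain ⟨q, hq, hdq⟩ := slim hconn A M hM hmem hconnA hdiam hthin γ γyw γzw hγ hγyw hγzw
    (γ.getVert t) hps
  refine ⟨γ.getVert t, hps, ?_⟩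
  have hdyp : G.dist y (γ.getVert t) = t := by
    have h0 := geodist hconn γ hγ (i := 0) (k := t) (by omega) htle
    rw [Walk.getVert_zero] at h0
    omega
  have hdpz : G.dist (γ.getVert t) z + t = γ.length := by
    have h0 := geodist hconn γ hγ (i := t) (k := γ.length) htle le_rfl
    rw [Walk.getVert_length] at h0
    omega
  rcases hq with hq | hq
  · obtain ⟨m, hmv, hmL⟩ := Walk.mem_support_iff_exists_getVert.mp hq
    have hdyq : G.dist y q = m := by
      rw [← hmv]
      have h0 := geodist hconn γyw hγyw (i := 0) (k := m) (by omega) hmL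
      rw [Walk.getVert_zero] at h0
      omega
    have hdqw : G.dist q w + m = γyw.length := by
      rw [← hmv]
      have h0 := geodist hconn γyw hγyw (i := m) (k := γyw.length) hmL le_rfl
      rw [Walk.getVert_length] at h0
      omega
    have f1 : G.dist w (γ.getVert t) ≤ G.dist w q + G.dist q (γ.getVert t) := hconn.dist_triangle
    have f2 : G.dist y (γ.getVert t) ≤ G.dist y q + G.dist q (γ.getVert t) := hconn.dist_triangle
    have c1 : G.dist w q = G.dist q w := SimpleGraph.dist_comm ..
    have c2 : G.dist q (γ.getVert t) = G.dist (γ.getVert t) q := SimpleGraph.dist_comm ..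
    omega
  · obtain ⟨m, hmv, hmL⟩ := Walk.mem_support_iff_exists_getVert.mp hq
    have hdzq : G.dist z q = m := by
      rw [← hmv]
      have h0 := geodist hconn γzw hγzw (i := 0) (k := m) (by omega) hmL
      rw [Walk.getVert_zero] at h0
      omega
    have hdqw : G.dist q w + m = γzw.length := by
      rw [← hmv]
      have h0 := geodist hconn γzw hγzw (i := m) (k := γzw.length) hmL le_rfl
      rw [Walk.getVert_length] at h0
      omega
    have f1 : G.dist w (γ.getVert t) ≤ G.dist w q + G.dist q (γ.getVert t) := hconn.dist_triangle
    have f2 : G.dist z (γ.getVert t) ≤ G.dist z q + G.dist q (γ.getVert t) := hconn.dist_triangle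
    have c1 : G.dist w q = G.dist q w := SimpleGraph.dist_comm ..
    have c2 : G.dist q (γ.getVert t) = G.dist (γ.getVert t) q := SimpleGraph.dist_comm ..
    have c3 : G.dist z (γ.getVert t) = G.dist (γ.getVert t) z := SimpleGraph.dist_comm ..
    omega

end GuessGeo

/-- Guessing geodesics criterion: if a connected graph admits, for every pair of vertices `x, y`,
a connected subgraph `A x y` containing `x` and `y`, such that `A x y` has diameter at most `M`
when `d(x,y) ≤ 1` and the `A`-triangles are `M`-thin, then the graph is `δ`-hyperbolic (stated
via the four-point condition on the combinatorial metric) with `δ` depending only on `M`. -/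
theorem guessing_geodesics (M : ℕ) (hM : 0 < M) :
    ∃ δ : ℕ, ∀ (V : Type) (G : SimpleGraph V), G.Connected →
      ∀ A : V → V → Set V,
        (∀ x y : V, x ∈ A x y ∧ y ∈ A x y) →
        (∀ x y : V, (G.induce (A x y)).Connected) →
        (∀ x y : V, G.dist x y ≤ 1 → ∀ u ∈ A x y, ∀ v ∈ A x y, G.dist u v ≤ M) →
        (∀ x y z : V, ∀ u ∈ A x y, ∃ v ∈ A x z ∪ A y z, G.dist u v ≤ M) →
        ∀ x y z w : V, G.dist x y + G.dist z w ≤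
          max (G.dist x z + G.dist y w) (G.dist x w + G.dist y z) + δ := by
  refine ⟨6 * (4 * 2 ^ (8 * (M + 1)) + M + 1) + 2, ?_⟩
  intro V G hconn A hmem hconnA hdiam hthin x y z w
  obtain ⟨γxy, hγxy⟩ := hconn.exists_walk_length_eq_dist x y
  obtain ⟨γxz, hγxz⟩ := hconn.exists_walk_length_eq_dist x z
  obtain ⟨γyz, hγyz⟩ := hconn.exists_walk_length_eq_dist y z
  obtain ⟨p, hp, hpineq⟩ := GuessGeo.lem_ii hconn A M hM hmem hconnA hdiam hthin w γxy hγxy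
  obtain ⟨q, hq, hdq⟩ := GuessGeo.slim hconn A M hM hmem hconnA hdiam hthin γxy γxz γyz
    hγxy hγxz hγyz p hp
  have hwq : G.dist w q ≤ G.dist w p + (4 * 2 ^ (8 * (M + 1)) + M + 1) := by
    have t : G.dist w q ≤ G.dist w p + G.dist p q := hconn.dist_triangle
    omega
  have hmax1 : G.dist x z + G.dist y w ≤
      max (G.dist x z + G.dist y w) (G.dist x w + G.dist y z) := le_max_left _ _
  have hmax2 : G.dist x w + G.dist y z ≤
      max (G.dist x z + G.dist y w) (G.dist x w + G.dist y z) := le_max_right _ _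
  have czw : G.dist z w = G.dist w z := SimpleGraph.dist_comm ..
  have cyw : G.dist y w = G.dist w y := SimpleGraph.dist_comm ..
  have cxw : G.dist x w = G.dist w x := SimpleGraph.dist_comm ..
  rcases hq with hq | hq
  · have hi := GuessGeo.lem_i hconn w γxz hγxz q hq
    omega
  · have hi := GuessGeo.lem_i hconn w γyz hγyz q hq
    omega
end

section
/- Let X be a compact metrizable totally disconnected space, F ⊆ X, and let e ∈ X be a point. Suppose there exist pairwise disjoint clopen sets V₀, V₁, V₂, … in X with e ∈ V₀, a point f ∉ ⋃ᵢ Vᵢ, and a decreasing sequence of clopen sets W₁ ⊇ W₂ ⊇ ⋯ with ⋂ᵢ Wᵢ = {f} and Vᵢ ⊆ Wᵢ for all i ≥ 1, together with homeomorphisms of pairs φ₀ : (U, U∩F) → (V₁, V₁∩F) for a given clopen U with e ∈ U ⊆ V₀, and φᵢ : (Vᵢ, Vᵢ∩F) → (Vᵢ₊₁, Vᵢ₊₁∩F) for all i ≥ 1. Then the map Φ : X → X \ U defined by Φ = φ₀ on U, Φ = φᵢ on Vᵢ for i ≥ 1, and Φ = identity elsewhere, is a homeomorphism of pairs (X, F)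 → (X \ U, F \ U). -/
/-- The shift map built from a sequence of pairwise disjoint clopen sets accumulating at a
fixed point `f`, defined by `φ₀` on `U`, `φᵢ` on `Vᵢ` (`i ≥ 1`) and the identity elsewhere,
is a homeomorphism of pairs `(X, F) → (X \ U, F \ U)`. -/
theorem shift_homeomorphism {X : Type*} [TopologicalSpace X] [CompactSpace X]
    [TopologicalSpace.MetrizableSpace X] [TotallyDisconnectedSpace X]
    (F : Set X) (e f : X) (U : Set X) (V W : ℕ → Set X)
    (hVclopen : ∀ i, IsClopen (V i)) (hVdisj : Pairwise (Function.onFun Disjoint V))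
    (heV : e ∈ V 0) (hf : f ∉ ⋃ i, V i)
    (hWclopen : ∀ i, IsClopen (W i)) (hWdec : ∀ i, W (i + 1) ⊆ W i)
    (hWinter : (⋂ i, W i) = {f}) (hVW : ∀ i, V (i + 1) ⊆ W (i + 1))
    (hUclopen : IsClopen U) (heU : e ∈ U) (hUV : U ⊆ V 0)
    (φ₀ : ↥U ≃ₜ ↥(V 1)) (hφ₀ : ∀ x : U, ((x : X) ∈ F ↔ ((φ₀ x : X) ∈ F)))
    (φ : ∀ i : ℕ, ↥(V (i + 1)) ≃ₜ ↥(V (i + 2)))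
    (hφ : ∀ i (x : ↥(V (i + 1))), ((x : X) ∈ F ↔ ((φ i x : X) ∈ F)))
    (Φ : X → X)
    (hΦU : ∀ x (hx : x ∈ U), Φ x = φ₀ ⟨x, hx⟩)
    (hΦV : ∀ i x (hx : x ∈ V (i + 1)), Φ x = φ i ⟨x, hx⟩)
    (hΦid : ∀ x, x ∉ U → x ∉ ⋃ i, V (i + 1) → Φ x = x) :
    ∃ Ψ : X ≃ₜ ↥(Uᶜ), (∀ x, (Ψ x : X) = Φ x) ∧
      ((fun x => (Ψ x : X)) '' F = F \ U) := by
  classical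
  letI := TopologicalSpace.metrizableSpaceMetric X
  have hWanti : Antitone W := antitone_nat_of_succ_le hWdec
  have hfW : ∀ n, f ∈ W n := by
    intro n
    have hh : f ∈ ⋂ i, W i := by rw [hWinter]; rfl
    exact Set.mem_iInter.1 hh n
  have hfV : ∀ i, f ∉ V i := fun i hi => hf (Set.mem_iUnion.2 ⟨i, hi⟩)
  have hfU : f ∉ U := fun h => hfV 0 (hUV h)
  have hdisj : ∀ i j, i ≠ j → ∀ x, x ∈ V i → x ∉ V j := by
    intro i j hij x hxi hxj
    exact Set.disjoint_left.1 (hVdisj hij) hxi hxj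
  have hUVdisj : ∀ i x, x ∈ U → x ∉ V (i + 1) :=
    fun i x hx => hdisj 0 (i + 1) (by omega) x (hUV hx)
  -- trichotomy of values
  have hval : ∀ x : X, (∃ hx : x ∈ U, Φ x = φ₀ ⟨x, hx⟩) ∨
      (∃ i, ∃ hx : x ∈ V (i + 1), Φ x = φ i ⟨x, hx⟩) ∨
      (x ∉ U ∧ (∀ i, x ∉ V (i + 1)) ∧ Φ x = x) := by
    intro x
    by_cases hx : x ∈ U
    · exact Or.inl ⟨hx, hΦU x hx⟩
    by_cases hx' : ∃ i, x ∈ V (i + 1)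
    · obtain ⟨i, hi⟩ := hx'
      exact Or.inr (Or.inl ⟨i, hi, hΦV i x hi⟩)
    push_neg at hx'
    exact Or.inr (Or.inr ⟨hx, hx',
      hΦid x hx (by simp only [Set.mem_iUnion, not_exists]; exact hx')⟩)
  have hnotU : ∀ x, Φ x ∉ U := by
    intro x
    rcases hval x with ⟨hx, hx2⟩ | ⟨i, hx, hx2⟩ | ⟨hx, _, hx2⟩
    · rw [hx2]; exact fun h => hUVdisj 0 _ h (φ₀ ⟨x, hx⟩).2
    · rw [hx2]; exact fun h => hUVdisj (i + 1) _ h (φ i ⟨x, hx⟩).2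
    · rw [hx2]; exact hx
  -- injectivity
  have hinj : Function.Injective Φ := by
    intro a b hab
    rcases hval a with ⟨ha, ha2⟩ | ⟨i, ha, ha2⟩ | ⟨ha, ha', ha2⟩ <;>
      rcases hval b with ⟨hb, hb2⟩ | ⟨j, hb, hb2⟩ | ⟨hb, hb', hb2⟩ <;>
      rw [ha2, hb2] at hab
    · exact congrArg Subtype.val (φ₀.injective (Subtype.coe_injective hab))
    · exact absurd ((hab ▸ (φ₀ ⟨a, ha⟩).2 : (φ j ⟨b, hb⟩ : X) ∈ V 1))
        (hdisj (j + 2) 1 (by omega) _ (φ j ⟨b, hb⟩).2)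
    · exact absurd ((hab ▸ (φ₀ ⟨a, ha⟩).2 : b ∈ V 1)) (hb' 0)
    · exact absurd ((hab.symm ▸ (φ₀ ⟨b, hb⟩).2 : (φ i ⟨a, ha⟩ : X) ∈ V 1))
        (hdisj (i + 2) 1 (by omega) _ (φ i ⟨a, ha⟩).2)
    · by_cases hij : i = j
      · subst hij
        exact congrArg Subtype.val ((φ i).injective (Subtype.coe_injective hab))
      · exact absurd ((hab ▸ (φ i ⟨a, ha⟩).2 : (φ j ⟨b, hb⟩ : X) ∈ V (i + 2)))
          (hdisj (j + 2) (i + 2) (by omega) _ (φ j ⟨b, hb⟩).2)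
    · exact absurd ((hab ▸ (φ i ⟨a, ha⟩).2 : b ∈ V (i + 2))) (hb' (i + 1))
    · exact absurd ((hab.symm ▸ (φ₀ ⟨b, hb⟩).2 : a ∈ V 1)) (ha' 0)
    · exact absurd ((hab.symm ▸ (φ j ⟨b, hb⟩).2 : a ∈ V (j + 2))) (ha' (j + 1))
    · exact hab
  -- surjectivity onto Uᶜ, with control of F-membership
  have hsurj : ∀ y ∉ U, ∃ x, Φ x = y ∧ (x ∈ F ↔ y ∈ F) := by
    intro y hy
    by_cases h1 : y ∈ V 1
    · refine ⟨φ₀.symm ⟨y, h1⟩, ?_, ?_⟩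
      · rw [hΦU _ (φ₀.symm ⟨y, h1⟩).2]
        exact congrArg Subtype.val (φ₀.apply_symm_apply ⟨y, h1⟩)
      · have := hφ₀ (φ₀.symm ⟨y, h1⟩)
        rwa [φ₀.apply_symm_apply] at this
    by_cases h2 : ∃ i, y ∈ V (i + 2)
    · obtain ⟨i, hi⟩ := h2
      refine ⟨(φ i).symm ⟨y, hi⟩, ?_, ?_⟩
      · rw [hΦV i _ ((φ i).symm ⟨y, hi⟩).2]
        exact congrArg Subtype.val ((φ i).apply_symm_apply ⟨y, hi⟩)
      · have := hφ i ((φ i).symm ⟨y, hi⟩)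
        rwa [(φ i).apply_symm_apply] at this
    · refine ⟨y, hΦid y hy ?_, Iff.rfl⟩
      simp only [Set.mem_iUnion, not_exists]
      intro j hj
      cases j with
      | zero => exact h1 hj
      | succ k => exact h2 ⟨k, hj⟩
  -- a compactness lemma for the W's
  have hWsub : ∀ O : Set X, IsOpen O → f ∈ O → ∃ n, W n ⊆ O := by
    intro O hO hfO
    refine exists_subset_nhds_of_compactSpace
      (fun m n => ⟨max m n, hWanti (le_max_left m n), hWanti (le_max_right m n)⟩)
      (fun n => (hWclopen n).1) (fun x hx => ?_)
    rw [hWinter] at hx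
    rw [hx]
    exact hO.mem_nhds hfO
  -- continuity
  have hcont : Continuous Φ := by
    rw [continuous_iff_continuousAt]
    intro x
    by_cases hxU : x ∈ U
    · have hco : ContinuousOn Φ U := by
        rw [continuousOn_iff_continuous_restrict]
        have hr : U.domRestrict Φ = fun y : U => (φ₀ y : X) := by
          funext y; exact hΦU y y.2
        rw [hr]
        exact continuous_subtype_val.comp φ₀.continuous
      exact hco.continuousAt (hUclopen.2.mem_nhds hxU)
    by_cases hxV : ∃ i, x ∈ V (i + 1)
    · obtain ⟨i, hi⟩ := hxV
      have hco : ContinuousOn Φ (V (i + 1)) := by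
        rw [continuousOn_iff_continuous_restrict]
        have hr : (V (i + 1)).domRestrict Φ = fun y : V (i + 1) => (φ i y : X) := by
          funext y; exact hΦV i y y.2
        rw [hr]
        exact continuous_subtype_val.comp (φ i).continuous
      exact hco.continuousAt ((hVclopen (i + 1)).2.mem_nhds hi)
    push_neg at hxV
    -- helper: Φ = id near x gives continuity
    have hid_cont : ∀ S : Set X, IsOpen S → x ∈ S → (∀ y ∈ S, Φ y = y) →
        ContinuousAt Φ x := by
      intro S hS hxS hid
      refine continuousAt_id.congr ?_
      exact Filter.eventuallyEq_of_mem (hS.mem_nhds hxS) (fun y hy => (hid y hy).symm)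
    by_cases hxf : x = f
    · subst hxf
      have hΦf : Φ x = x := hΦid x hxU
        (by simp only [Set.mem_iUnion, not_exists]; exact hxV)
      rw [ContinuousAt, hΦf, tendsto_nhds]
      intro O hO hxO
      obtain ⟨n, hn⟩ := hWsub O hO hxO
      have hTopen : IsOpen (W n ∩ ⋂ i ∈ Finset.range (n + 1), (V i)ᶜ) :=
        (hWclopen n).2.inter (isOpen_biInter_finset fun i _ => (hVclopen i).1.isOpen_compl)
      have hxT : x ∈ W n ∩ ⋂ i ∈ Finset.range (n + 1), (V i)ᶜ := by
        refine ⟨hfW n, ?_⟩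
        simp only [Set.mem_iInter, Set.mem_compl_iff]
        exact fun i _ => hfV i
      refine Filter.mem_of_superset (hTopen.mem_nhds hxT) ?_
      rintro y ⟨hyW, hyV⟩
      simp only [Set.mem_iInter, Set.mem_compl_iff, Finset.mem_range] at hyV
      rcases hval y with ⟨hy, hy2⟩ | ⟨j, hy, hy2⟩ | ⟨_, _, hy2⟩
      · exact absurd (hUV hy) (hyV 0 (by omega))
      · have hjn : ¬ (j + 1 < n + 1) := fun h => hyV (j + 1) h hy
        have : (φ j ⟨y, hy⟩ : X) ∈ W n :=
          hWanti (by omega) (hVW (j + 1) (φ j ⟨y, hy⟩).2)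
        rw [Set.mem_preimage, hy2]
        exact hn this
      · rw [Set.mem_preimage, hy2]
        exact hn hyW
    · by_cases hxV0 : x ∈ V 0
      · refine hid_cont (V 0 ∩ Uᶜ) ((hVclopen 0).2.inter hUclopen.1.isOpen_compl)
          ⟨hxV0, hxU⟩ ?_
        rintro y ⟨hy0, hyU⟩
        refine hΦid y hyU ?_
        simp only [Set.mem_iUnion, not_exists]
        exact fun i => hdisj 0 (i + 1) (by omega) y hy0
      · obtain ⟨n, hn⟩ : ∃ n, x ∉ W n := by
          by_contra h
          push_neg at h
          have : x ∈ ⋂ i, W i := Set.mem_iInter.2 h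
          rw [hWinter] at this
          exact hxf this
        refine hid_cont ((W n)ᶜ ∩ ⋂ i ∈ Finset.range (n + 1), (V i)ᶜ)
          ((hWclopen n).1.isOpen_compl.inter
            (isOpen_biInter_finset fun i _ => (hVclopen i).1.isOpen_compl))
          ⟨hn, ?_⟩ ?_
        · simp only [Set.mem_iInter, Set.mem_compl_iff, Finset.mem_range]
          intro i _
          cases i with
          | zero => exact hxV0
          | succ k => exact hxV k
        · rintro y ⟨hyW, hyV⟩
          simp only [Set.mem_iInter, Set.mem_compl_iff, Finset.mem_range] at hyV
          have hyU : y ∉ U := fun h => hyV 0 (by omega) (hUV h)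
          refine hΦid y hyU ?_
          simp only [Set.mem_iUnion, not_exists]
          intro i hi
          by_cases hin : i + 1 < n + 1
          · exact hyV (i + 1) hin hi
          · exact hyW (hWanti (by omega) (hVW i hi))
  -- build the homeomorphism
  have hbij : Function.Bijective (fun x => (⟨Φ x, hnotU x⟩ : ↥(Uᶜ))) := by
    constructor
    · intro a b h
      exact hinj (congrArg Subtype.val h)
    · rintro ⟨y, hy⟩
      obtain ⟨x, hx1, _⟩ := hsurj y hy
      exact ⟨x, Subtype.ext hx1⟩
  let Ψe : X ≃ ↥(Uᶜ) := Equiv.ofBijective _ hbij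
  have hΨcont : Continuous Ψe := hcont.subtype_mk _
  refine ⟨hΨcont.homeoOfEquivCompactToT2, fun x => rfl, ?_⟩
  have himg : Φ '' F = F \ U := by
    ext y
    constructor
    · rintro ⟨x, hxF, rfl⟩
      refine ⟨?_, hnotU x⟩
      rcases hval x with ⟨hx, hx2⟩ | ⟨i, hx, hx2⟩ | ⟨_, _, hx2⟩
      · rw [hx2]; exact (hφ₀ ⟨x, hx⟩).1 hxF
      · rw [hx2]; exact (hφ i ⟨x, hx⟩).1 hxF
      · rw [hx2]; exact hxF
    · rintro ⟨hyF, hyU⟩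
      obtain ⟨x, hx1, hx2⟩ := hsurj y hyU
      exact ⟨x, hx2.2 hyF, hx1⟩
  have hfun : (fun x => ((hΨcont.homeoOfEquivCompactToT2 x : X))) = Φ := funext fun x => rfl
  rw [hfun, himg]
end
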